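/- Let G be a finite unweighted simple digraph with Laplacian matrix L (out-degree Laplacian) and forest matrix Ω = (I + L)⁻¹. Then Ω is row-stochastic: every entry of Ω lies in [0,1] and each row of Ω sums to 1. -/

import Mathlib

open Finset

/-- A spanning converging forest of the digraph with edge relation `E`,
encoded by its successor map `f : V → Option V` (`f i = some j` means edge `(i,j)`
is in the forest, `f i = none` means `i` is a root).  Acyclicity is expressed by a
height function that strictly decreases along edges. -/
def IsSCF {V : Type*} (E : V → V → Prop) (f : V → Option V) : Prop :=
  (∀ i j, f i = some j → E i j) ∧ ∃ h : V → ℕ, ∀ i j, f i = some j → h j < h i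

open scoped Classical in
/-- The set `F` of all spanning converging forests of the digraph `E`. -/
noncomputable def forests {V : Type*} [Fintype V] [DecidableEq V]
    (E : V → V → Prop) : Finset (V → Option V) :=
  Finset.univ.filter (IsSCF E)

/-- The root `r_φ(i)` of the tree containing node `i` in the forest `f`:
follow successors until reaching a root. -/
def rootOf {V : Type*} [Fintype V] (f : V → Option V) (i : V) : V :=
  (fun x => (f x).getD x)^[Fintype.card V] i

/-- The combinatorial forest-matrix entry `ω_{ij} = |F_{ij}| / |F|`. -/
noncomputable def fOmega {V : Type*} [Fintype V] [DecidableEq V]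
    (E : V → V → Prop) (i j : V) : ℝ :=
  (((forests E).filter (fun f => rootOf f i = j)).card : ℝ) / ((forests E).card : ℝ)

/-- Expectation of `g` under a uniformly random spanning converging forest. -/
noncomputable def expVal {V : Type*} [Fintype V] [DecidableEq V]
    (E : V → V → Prop) (g : (V → Option V) → ℝ) : ℝ :=
  (∑ f ∈ forests E, g f) / ((forests E).card : ℝ)

/-- Variance of `g` under a uniformly random spanning converging forest. -/
noncomputable def varVal {V : Type*} [Fintype V] [DecidableEq V]
    (E : V → V → Prop) (g : (V → Option V) → ℝ) : ℝ :=
  expVal E (fun f => (g f - expVal E g) ^ 2)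

/-- The indicator estimator `ω̂_{ij}(φ) = 1_{r_φ(i) = j}`. -/
noncomputable def indEst {V : Type*} [Fintype V] [DecidableEq V]
    (i j : V) (f : V → Option V) : ℝ :=
  if rootOf f i = j then 1 else 0

/-- Out-degree `d_i` of node `i`. -/
def outDeg {V : Type*} [Fintype V] (E : V → V → Prop) [DecidableRel E] (i : V) : ℕ :=
  (Finset.univ.filter (fun j => E i j)).card

/-- In-neighbors `N⁻(j)` of node `j`. -/
def inNbrs {V : Type*} [Fintype V] (E : V → V → Prop) [DecidableRel E] (j : V) : Finset V :=
  Finset.univ.filter (fun k => E k j)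

/-- The out-degree Laplacian `L = D - A`. -/
noncomputable def lap {V : Type*} [Fintype V] [DecidableEq V]
    (E : V → V → Prop) [DecidableRel E] : Matrix V V ℝ :=
  Matrix.of fun i j => (if i = j then (outDeg E i : ℝ) else 0) - (if E i j then (1 : ℝ) else 0)

/-- The forest matrix `Ω = (I + L)⁻¹`. -/
noncomputable def forestMatrix {V : Type*} [Fintype V] [DecidableEq V]
    (E : V → V → Prop) [DecidableRel E] : Matrix V V ℝ :=
  (1 + lap E)⁻¹


section RowStochasticAux

attribute [local instance] Matrix.linftyOpSeminormedAddCommGroup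
  Matrix.linftyOpNormedAddCommGroup Matrix.linftyOpNonUnitalSemiNormedRing
  Matrix.linftyOpSemiNormedRing Matrix.linftyOpNonUnitalNormedRing
  Matrix.linftyOpNormedRing

variable {V : Type*} [Fintype V] [DecidableEq V]

private instance matrixCompleteSpace :
    @CompleteSpace (Matrix V V ℝ) PseudoMetricSpace.toUniformSpace :=
  letI : NormedSpace ℝ (Matrix V V ℝ) := Matrix.linftyOpNormedSpace
  FiniteDimensional.complete ℝ (Matrix V V ℝ)

/-- The adjacency matrix. -/
private noncomputable def adjM (E : V → V → Prop) [DecidableRel E] : Matrix V V ℝ :=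
  Matrix.of fun i j => if E i j then (1 : ℝ) else 0

/-- `1 + d_i`. -/
private noncomputable def cdeg (E : V → V → Prop) [DecidableRel E] (i : V) : ℝ :=
  1 + (outDeg E i : ℝ)

private lemma cdeg_pos (E : V → V → Prop) [DecidableRel E] (i : V) : 0 < cdeg E i := by
  have : (0 : ℝ) ≤ (outDeg E i : ℝ) := Nat.cast_nonneg _
  unfold cdeg; linarith

/-- The substochastic matrix `P = (I + D)⁻¹ A`. -/
private noncomputable def Pmat (E : V → V → Prop) [DecidableRel E] : Matrix V V ℝ :=
  Matrix.diagonal (fun i => (cdeg E i)⁻¹) * adjM E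

private lemma Pmat_apply (E : V → V → Prop) [DecidableRel E] (i j : V) :
    Pmat E i j = (cdeg E i)⁻¹ * (if E i j then (1 : ℝ) else 0) := by
  simp [Pmat, Matrix.diagonal_mul, adjM]

private lemma Pmat_nonneg (E : V → V → Prop) [DecidableRel E] (i j : V) :
    0 ≤ Pmat E i j := by
  rw [Pmat_apply]
  have := (cdeg_pos E i).le
  positivity

private lemma Pmat_pow_nonneg (E : V → V → Prop) [DecidableRel E] (n : ℕ) (i j : V) :
    0 ≤ (Pmat E ^ n) i j := by
  induction n generalizing i j with
  | zero =>
    simp only [pow_zero, Matrix.one_apply]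
    split <;> norm_num
  | succ n ih =>
    rw [pow_succ, Matrix.mul_apply]
    exact Finset.sum_nonneg fun k _ => mul_nonneg (ih i k) (Pmat_nonneg E k j)

private lemma sum_adj_row (E : V → V → Prop) [DecidableRel E] (i : V) :
    ∑ j, (if E i j then (1 : ℝ) else 0) = (outDeg E i : ℝ) := by
  rw [Finset.sum_boole]
  simp [outDeg]

private lemma Pmat_norm_lt (E : V → V → Prop) [DecidableRel E] : ‖Pmat E‖ < 1 := by
  rw [Matrix.linfty_opNorm_def]
  have h1 : ((1 : NNReal) : ℝ) = 1 := by norm_num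
  rw [← h1, NNReal.coe_lt_coe]
  refine (Finset.sup_lt_iff (by norm_num)).mpr fun i _ => ?_
  rw [← NNReal.coe_lt_coe, NNReal.coe_sum, h1]
  have hrow : ∑ j, (‖Pmat E i j‖₊ : ℝ) = (cdeg E i)⁻¹ * (outDeg E i : ℝ) := by
    rw [← sum_adj_row E i, Finset.mul_sum]
    refine Finset.sum_congr rfl fun j _ => ?_
    rw [coe_nnnorm, Real.norm_eq_abs, abs_of_nonneg (Pmat_nonneg E i j), Pmat_apply]
  rw [hrow]
  have hc := cdeg_pos E i
  rw [inv_mul_lt_iff₀ hc, mul_one]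
  unfold cdeg; linarith

private lemma ILfactor (E : V → V → Prop) [DecidableRel E] :
    1 + lap E = Matrix.diagonal (cdeg E) * (1 - Pmat E) := by
  ext i j
  rw [Matrix.diagonal_mul]
  simp only [Matrix.add_apply, Matrix.sub_apply, lap, Matrix.of_apply, Matrix.one_apply,
    Pmat_apply]
  by_cases h : i = j
  · subst h
    simp only [if_pos rfl, if_true]
    have hc := (cdeg_pos E i).ne'
    field_simp [cdeg]
    unfold cdeg; ring
  · simp only [if_neg h]
    rw [mul_sub, mul_zero, ← mul_assoc, mul_inv_cancel₀ (cdeg_pos E i).ne', one_mul]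
    ring

private lemma isUnit_one_sub_Pmat (E : V → V → Prop) [DecidableRel E] :
    IsUnit (1 - Pmat E) :=
  isUnit_one_sub_of_norm_lt_one (Pmat_norm_lt E)

private lemma isUnit_det_IL (E : V → V → Prop) [DecidableRel E] :
    IsUnit (1 + lap E).det := by
  rw [ILfactor E, Matrix.det_mul, Matrix.det_diagonal]
  refine (IsUnit.mul_iff).mpr ⟨isUnit_iff_ne_zero.mpr ?_, ?_⟩
  · exact Finset.prod_ne_zero_iff.mpr fun i _ => (cdeg_pos E i).ne'
  · exact (Matrix.isUnit_iff_isUnit_det _).mp (isUnit_one_sub_Pmat E)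

private lemma entry_abs_le_norm (M : Matrix V V ℝ) (i j : V) : |M i j| ≤ ‖M‖ := by
  have h1 : ‖M i j‖₊ ≤ ∑ k, ‖M i k‖₊ :=
    Finset.single_le_sum (f := fun k => ‖M i k‖₊) (fun k _ => zero_le) (Finset.mem_univ j)
  have h2 : (∑ k, ‖M i k‖₊) ≤ Finset.univ.sup fun i => ∑ j, ‖M i j‖₊ :=
    Finset.le_sup (f := fun i => ∑ j, ‖M i j‖₊) (Finset.mem_univ i)
  have := (h1.trans h2)
  rw [← NNReal.coe_le_coe] at this
  rw [← Real.norm_eq_abs, ← coe_nnnorm, Matrix.linfty_opNorm_def]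
  exact this

private lemma inv_one_sub_Pmat_nonneg (E : V → V → Prop) [DecidableRel E] (i j : V) :
    0 ≤ (1 - Pmat E)⁻¹ i j := by
  have hP := Pmat_norm_lt E
  have hsum : HasSum (fun n : ℕ => Pmat E ^ n) (Ring.inverse (1 - Pmat E)) :=
    hasSum_geom_series_inverse (Pmat E) hP
  rw [Matrix.nonsing_inv_eq_ringInverse]
  have htend := hsum.tendsto_sum_nat
  -- entries converge
  have hentry : Filter.Tendsto
      (fun n : ℕ => (∑ k ∈ Finset.range n, Pmat E ^ k) i j) Filter.atTop
      (nhds (Ring.inverse (1 - Pmat E) i j)) := by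
    rw [tendsto_iff_norm_sub_tendsto_zero]
    have hnorm : Filter.Tendsto
        (fun n : ℕ => ‖(∑ k ∈ Finset.range n, Pmat E ^ k) - Ring.inverse (1 - Pmat E)‖)
        Filter.atTop (nhds 0) := by
      rw [← tendsto_iff_norm_sub_tendsto_zero]
      exact htend
    refine squeeze_zero (fun n => norm_nonneg _) (fun n => ?_) hnorm
    rw [Real.norm_eq_abs]
    have := entry_abs_le_norm
      ((∑ k ∈ Finset.range n, Pmat E ^ k) - Ring.inverse (1 - Pmat E)) i j
    simpa using this
  refine ge_of_tendsto' hentry fun n => ?_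
  rw [Matrix.sum_apply]
  exact Finset.sum_nonneg fun k _ => Pmat_pow_nonneg E k i j

private lemma forestMatrix_entry_nonneg (E : V → V → Prop) [DecidableRel E] (i j : V) :
    0 ≤ forestMatrix E i j := by
  have hfac := ILfactor E
  have hrw : forestMatrix E = (1 - Pmat E)⁻¹ * (Matrix.diagonal (cdeg E))⁻¹ := by
    rw [forestMatrix, hfac, Matrix.mul_inv_rev]
  have hdiag : (Matrix.diagonal (cdeg E))⁻¹ = Matrix.diagonal (fun i => (cdeg E i)⁻¹) := by
    refine Matrix.inv_eq_right_inv ?_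
    rw [Matrix.diagonal_mul_diagonal]
    convert Matrix.diagonal_one with k
    exact mul_inv_cancel₀ (cdeg_pos E k).ne'
  rw [hrw, hdiag, Matrix.mul_diagonal]
  exact mul_nonneg (inv_one_sub_Pmat_nonneg E i j) (inv_nonneg.mpr (cdeg_pos E j).le)

private lemma row_sum_IL (E : V → V → Prop) [DecidableRel E] (j : V) :
    ∑ k, (1 + lap E) j k = 1 := by
  simp only [Matrix.add_apply, Matrix.one_apply, lap, Matrix.of_apply]
  rw [Finset.sum_add_distrib, Finset.sum_sub_distrib, sum_adj_row E j]
  simp [Finset.sum_ite_eq]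

private lemma forestMatrix_row_sum (E : V → V → Prop) [DecidableRel E] (i : V) :
    ∑ j, forestMatrix E i j = 1 := by
  have hinv : forestMatrix E * (1 + lap E) = 1 :=
    Matrix.nonsing_inv_mul _ (isUnit_det_IL E)
  calc ∑ j, forestMatrix E i j
      = ∑ j, forestMatrix E i j * (∑ k, (1 + lap E) j k) := by
        refine Finset.sum_congr rfl fun j _ => ?_
        rw [row_sum_IL E j, mul_one]
    _ = ∑ k, ∑ j, forestMatrix E i j * (1 + lap E) j k := by
        simp_rw [Finset.mul_sum]; exact Finset.sum_comm
    _ = ∑ k, (forestMatrix E * (1 + lap E)) i k := by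
        simp [Matrix.mul_apply]
    _ = ∑ k, (1 : Matrix V V ℝ) i k := by rw [hinv]
    _ = 1 := by simp [Matrix.one_apply]

end RowStochasticAux

/-- the forest matrix of a finite simple digraph is row-stochastic:
all entries lie in [0,1] and each row sums to 1. -/
theorem forestMatrix_row_stochastic {V : Type*} [Fintype V] [DecidableEq V]
    (E : V → V → Prop) [DecidableRel E] (hE : ∀ i, ¬ E i i) :
    (∀ i j, 0 ≤ forestMatrix E i j ∧ forestMatrix E i j ≤ 1) ∧
    (∀ i, ∑ j, forestMatrix E i j = 1) := by
  refine ⟨fun i j => ⟨forestMatrix_entry_nonneg E i j, ?_⟩, forestMatrix_row_sum E⟩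
  have hsum := forestMatrix_row_sum E i
  calc forestMatrix E i j
      ≤ ∑ k, forestMatrix E i k :=
        Finset.single_le_sum (fun k _ => forestMatrix_entry_nonneg E i k) (Finset.mem_univ j)
    _ = 1 := hsum
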